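/- Let λ ∈ ℝ with λ < 1, and define ψ(r) = cos(r√(1−λ)), φ(r) = ψ(r)/cos(r), and t(r) = tan(r√(1−λ))/√(1−λ). Let r(t) denote the inverse function of t(r) on (−π/2, π/2). Then the function w(t) = λ^{1/(p−1)} · cos(r(t))/ψ(r(t)) satisfies the ODE w''(t) + (cos r(t))^{1−p} ψ(r(t))^{p+3} w(t)^p = 0 on the interval where r(t) ∈ (−π/2, π/2), for any p > 1 and λ > 0. -/

import Mathlib

open Real

lemma keyD1 (C s : ℝ) (hs : 0 < s) (t : ℝ) :
    HasDerivAt (fun t => C * cos (arctan (t*s)/s) * sqrt (1+(t*s)^2))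
      (C * (-sin (arctan (t*s)/s) + t*s^2 * cos (arctan (t*s)/s)) / sqrt (1+(t*s)^2)) t := by
  have hq : (0:ℝ) < 1 + (t*s)^2 := by positivity
  have hv : (0:ℝ) < sqrt (1+(t*s)^2) := Real.sqrt_pos.mpr hq
  have h1 : HasDerivAt (fun t : ℝ => t*s) s t := hasDerivAt_mul_const s
  have ha : HasDerivAt (fun t => arctan (t*s)) (1/(1+(t*s)^2) * s) t :=
    by have := (Real.hasDerivAt_arctan (t*s)).comp t h1; exact this
  have hb : HasDerivAt (fun t => arctan (t*s)/s) (1/(1+(t*s)^2) * s / s) t := ha.div_const s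
  have hu : HasDerivAt (fun t => cos (arctan (t*s)/s))
      (-sin (arctan (t*s)/s) * (1/(1+(t*s)^2) * s / s)) t :=
    (Real.hasDerivAt_cos _).comp t hb
  have hq' : HasDerivAt (fun t : ℝ => 1+(t*s)^2) (0 + (2 * (t*s)^1 * s)) t :=
    (hasDerivAt_const t (1:ℝ)).add (h1.pow 2)
  have hvv : HasDerivAt (fun t => sqrt (1+(t*s)^2))
      ((0 + 2*(t*s)^1*s) / (2 * sqrt (1+(t*s)^2))) t := hq'.sqrt (ne_of_gt hq)
  have := ((hu.const_mul C).fun_mul hvv)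
  have hsq : sqrt (1+(t*s)^2) ^ 2 = 1 + (t*s)^2 := Real.sq_sqrt (le_of_lt hq)
  set v := sqrt (1+(t*s)^2) with hvdef
  refine this.congr_deriv (Eq.symm ?_)
  rw [← hsq]
  field_simp
  ring

lemma keyD2 (C s lam : ℝ) (hs : 0 < s) (hlam : s^2 = 1 - lam) (t : ℝ) :
    HasDerivAt (fun t => C * (-sin (arctan (t*s)/s) + t*s^2 * cos (arctan (t*s)/s)) / sqrt (1+(t*s)^2))
      (-(C * lam * cos (arctan (t*s)/s)) / sqrt (1+(t*s)^2)^3) t := by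
  have hq : (0:ℝ) < 1 + (t*s)^2 := by positivity
  have hv : (0:ℝ) < sqrt (1+(t*s)^2) := Real.sqrt_pos.mpr hq
  have h1 : HasDerivAt (fun t : ℝ => t*s) s t := hasDerivAt_mul_const s
  have ha : HasDerivAt (fun t => arctan (t*s)) (1/(1+(t*s)^2) * s) t :=
    by have := (Real.hasDerivAt_arctan (t*s)).comp t h1; exact this
  have hb : HasDerivAt (fun t => arctan (t*s)/s) (1/(1+(t*s)^2) * s / s) t := ha.div_const s
  have hu : HasDerivAt (fun t => cos (arctan (t*s)/s))
      (-sin (arctan (t*s)/s) * (1/(1+(t*s)^2) * s / s)) t :=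
    (Real.hasDerivAt_cos _).comp t hb
  have hsin : HasDerivAt (fun t => sin (arctan (t*s)/s))
      (cos (arctan (t*s)/s) * (1/(1+(t*s)^2) * s / s)) t :=
    (Real.hasDerivAt_sin _).comp t hb
  have hprod : HasDerivAt (fun t => t * (s^2 * cos (arctan (t*s)/s)))
      (1 * (s^2 * cos (arctan (t*s)/s)) + t * (s^2 * (-sin (arctan (t*s)/s) * (1/(1+(t*s)^2) * s / s)))) t :=
    (hasDerivAt_id t).mul (hu.const_mul (s^2))
  have hN := (hsin.neg.add hprod).const_mul C
  have hq' : HasDerivAt (fun t : ℝ => 1+(t*s)^2) (0 + (2 * (t*s)^1 * s)) t :=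
    (hasDerivAt_const t (1:ℝ)).add (h1.pow 2)
  have hvv : HasDerivAt (fun t => sqrt (1+(t*s)^2))
      ((0 + 2*(t*s)^1*s) / (2 * sqrt (1+(t*s)^2))) t := hq'.sqrt (ne_of_gt hq)
  have hdiv := hN.fun_div hvv (ne_of_gt hv)
  have hfun : (fun t => C * (-sin (arctan (t*s)/s) + t*s^2 * cos (arctan (t*s)/s)) / sqrt (1+(t*s)^2))
      = (fun t => C * (-sin (arctan (t*s)/s) + t * (s^2 * cos (arctan (t*s)/s))) / sqrt (1+(t*s)^2)) := by
    funext x; ring_nf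
  rw [hfun]
  refine hdiv.congr_deriv (Eq.symm ?_)
  have hsq : sqrt (1+(t*s)^2) ^ 2 = 1 + (t*s)^2 := Real.sq_sqrt (le_of_lt hq)
  set v := sqrt (1+(t*s)^2) with hvdef
  rw [← hsq, show lam = 1 - s^2 by linarith]
  simp only [Pi.add_apply, Pi.neg_apply]
  field_simp
  linear_combination (-(2 * C * s^2 * Real.cos (arctan (s*t)/s))) * hsq

/-- The explicit function `w(t) = λ^{1/(p-1)} cos(r(t))/ψ(r(t))` is an exact solution of
the transformed equation `w'' + (cos r(t))^{1-p} ψ(r(t))^{p+3} w^p = 0`, where `r(t)` is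
the inverse of `t(r) = tan(r√(1-λ))/√(1-λ)` on `(-π/2, π/2)`. -/
theorem stmt1 (p lam : ℝ) (hp : 1 < p) (hl0 : 0 < lam) (hl1 : lam < 1)
    (T : ℝ) (hT : T = Real.tan ((π/2) * Real.sqrt (1 - lam)) / Real.sqrt (1 - lam))
    (ρ : ℝ → ℝ)
    (hρ : ∀ t ∈ Set.Ioo (-T) T, ρ t ∈ Set.Ioo (-(π/2)) (π/2) ∧
      Real.tan (ρ t * Real.sqrt (1 - lam)) / Real.sqrt (1 - lam) = t)
    (w : ℝ → ℝ)
    (hw : w = fun t => lam ^ ((1:ℝ)/(p-1)) * Real.cos (ρ t) / Real.cos (ρ t * Real.sqrt (1 - lam)))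
    (t₀ : ℝ) (ht₀ : t₀ ∈ Set.Ioo (-T) T) :
    deriv (deriv w) t₀
      + (Real.cos (ρ t₀)) ^ (1 - p) * (Real.cos (ρ t₀ * Real.sqrt (1 - lam))) ^ (p + 3)
        * (w t₀) ^ p = 0 := by
  set s := Real.sqrt (1 - lam) with hsdef
  have hs1 : 0 < s := Real.sqrt_pos.mpr (by linarith)
  have hs2 : s < 1 := by
    rw [hsdef]
    exact (Real.sqrt_lt' one_pos).mpr (by nlinarith)
  have hss : s^2 = 1 - lam := Real.sq_sqrt (by linarith)
  set C := lam ^ ((1:ℝ)/(p-1)) with hCdef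
  have hC : 0 < C := Real.rpow_pos_of_pos hl0 _
  -- ρ is explicitly arctan
  have hρeq : ∀ t ∈ Set.Ioo (-T) T, ρ t = arctan (t*s)/s := by
    intro t ht
    obtain ⟨hmem, htan⟩ := hρ t ht
    obtain ⟨hm1, hm2⟩ := hmem
    have htan' : Real.tan (ρ t * s) = t * s := by
      field_simp at htan
      linarith [htan]
    have hb1 : -(π/2) < ρ t * s := by
      nlinarith [mul_pos (show (0:ℝ) < ρ t + π/2 by linarith) hs1, pi_pos]
    have hb2 : ρ t * s < π/2 := by
      nlinarith [mul_pos (show (0:ℝ) < π/2 - ρ t by linarith) hs1, pi_pos]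
    have : arctan (t*s) = ρ t * s := by
      rw [← htan', Real.arctan_tan hb1 hb2]
    rw [this]
    field_simp
  -- the explicit solution
  set W : ℝ → ℝ := fun t => C * cos (arctan (t*s)/s) * sqrt (1+(t*s)^2) with hWdef
  have hcosat : ∀ t : ℝ, Real.cos (arctan (t*s)) = 1 / sqrt (1+(t*s)^2) := by
    intro t; rw [Real.cos_arctan]
  have hWw : Set.EqOn w W (Set.Ioo (-T) T) := by
    intro t ht
    have hρt := hρeq t ht
    have hq : (0:ℝ) < 1 + (t*s)^2 := by positivity
    have hv : (0:ℝ) < sqrt (1+(t*s)^2) := Real.sqrt_pos.mpr hq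
    have hρs : ρ t * s = arctan (t*s) := by
      rw [hρt]; field_simp
    rw [hw, hWdef]
    simp only
    rw [hρs, hρt, hcosat t]
    field_simp
  have heq : w =ᶠ[nhds t₀] W :=
    Filter.eventuallyEq_of_mem (isOpen_Ioo.mem_nhds ht₀) hWw
  have hd2 : deriv (deriv w) t₀ = deriv (deriv W) t₀ := (heq.deriv).deriv_eq
  have hderivW : deriv W = fun t =>
      C * (-sin (arctan (t*s)/s) + t*s^2 * cos (arctan (t*s)/s)) / sqrt (1+(t*s)^2) :=
    funext fun t => (keyD1 C s hs1 t).deriv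
  have hd2' : deriv (deriv W) t₀
      = -(C * lam * cos (arctan (t₀*s)/s)) / sqrt (1+(t₀*s)^2)^3 := by
    rw [hderivW]
    exact (keyD2 C s lam hs1 hss t₀).deriv
  -- abbreviations
  have hq0 : (0:ℝ) < 1 + (t₀*s)^2 := by positivity
  have hv0 : (0:ℝ) < sqrt (1+(t₀*s)^2) := Real.sqrt_pos.mpr hq0
  set x := cos (arctan (t₀*s)/s) with hxdef
  set v := sqrt (1+(t₀*s)^2) with hvdef
  have hρ0 := hρeq t₀ ht₀
  have hρs0 : ρ t₀ * s = arctan (t₀*s) := by rw [hρ0]; field_simp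
  have hxpos : 0 < x := by
    rw [hxdef, ← hρ0]
    exact Real.cos_pos_of_mem_Ioo (hρ t₀ ht₀).1
  have hwt0 : w t₀ = C * x * v := by
    have := hWw ht₀
    rw [this, hWdef]
  have hcosρ : Real.cos (ρ t₀) = x := by rw [hρ0]
  have hcosρs : Real.cos (ρ t₀ * s) = 1 / v := by
    rw [hρs0, Real.cos_arctan]
  rw [hd2, hd2', hwt0, hcosρ, hcosρs]
  -- rpow algebra
  have hp1 : p - 1 ≠ 0 := by linarith
  have hCp : C ^ p = lam * C := by
    rw [hCdef, ← Real.rpow_mul hl0.le,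
      show (1/(p-1))*p = 1 + 1/(p-1) by field_simp; ring,
      Real.rpow_add hl0, Real.rpow_one]
  have h1 : (C*x*v) ^ p = C^p * x^p * v^p := by
    rw [Real.mul_rpow (by positivity) hv0.le,
      Real.mul_rpow hC.le hxpos.le]
  have h2 : ((1:ℝ)/v) ^ (p+3) = 1 / v^(p+3) := by
    rw [Real.div_rpow (by norm_num) hv0.le, Real.one_rpow]
  have h3 : x^(1-p) * x^p = x := by
    rw [← Real.rpow_add hxpos, show (1-p)+p = (1:ℝ) by ring, Real.rpow_one]
  have h4 : v^p / v^(p+3) = 1 / v^(3:ℕ) := by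
    rw [← Real.rpow_sub hv0, show p - (p+3) = -(3:ℝ) by ring, Real.rpow_neg hv0.le,
      show ((3:ℝ)) = ((3:ℕ):ℝ) by norm_num, Real.rpow_natCast, one_div]
  have key : x^(1-p) * ((1/v)^(p+3)) * ((C*x*v)^p) = lam * C * x / v^(3:ℕ) := by
    calc x^(1-p) * ((1/v)^(p+3)) * ((C*x*v)^p)
        = (x^(1-p)*x^p) * (v^p / v^(p+3)) * (lam*C) := by rw [h1, h2, hCp]; ring
      _ = x * (1/v^(3:ℕ)) * (lam*C) := by rw [h3, h4]
      _ = lam * C * x / v^(3:ℕ) := by ring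
  rw [key]
  field_simp
  ring
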